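/- In the intrinsic theory IT(ℕ) (first-order logic with equality, symbols 0, S and a unary predicate N, with rules N(0), N(t) → N(S t), and the induction rule: from N(t), A[0], and ∀x (A[x] → A[S x]) infer A[t]), the relativized induction schema is derivable: B^N[0] → ∀y (N(y) → B^N[y] → B^N[S y]) → ∀y (N(y) → B^N[y]) for every formula B. -/

import Mathlib

open FirstOrder Language

universe u v

namespace PRFpaper

variable (L : FirstOrder.Language.{u, v})

/-- The term `0`. -/
def zeroT (c0 : L.Constants) {α : Type} : L.Term α := Term.func c0 ![]

/-- The term `S t`. -/
def succT (s1 : L.Functions 1) {α : Type} (t : L.Term α) : L.Term α := Term.func s1 ![t]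

/-- The numeral `n̄`: `S` applied `n` times to `0`. -/
def num (c0 : L.Constants) (s1 : L.Functions 1) {α : Type} : ℕ → L.Term α
  | 0 => zeroT L c0
  | n + 1 => succT L s1 (num c0 s1 n)

/-- A program: a set of equations, given as pairs of terms with variables in `ℕ`. -/
abbrev Program := Set (L.Term ℕ × L.Term ℕ)

/-- Derivability in equational logic from the program `P`: the equations of `P`,
reflexivity, substitution of arbitrary terms for variables, and replacement of
equal subterms (which generates symmetry, transitivity and congruence). -/
inductive EqDeriv (P : Program L) : L.Term ℕ → L.Term ℕ → Prop
  | ax {s t : L.Term ℕ} : (s, t) ∈ P → EqDeriv P s t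
  | refl (t : L.Term ℕ) : EqDeriv P t t
  | subst {s t : L.Term ℕ} (σ : ℕ → L.Term ℕ) :
      EqDeriv P s t → EqDeriv P (s.subst σ) (t.subst σ)
  | symm {s t : L.Term ℕ} : EqDeriv P s t → EqDeriv P t s
  | trans {s t r : L.Term ℕ} : EqDeriv P s t → EqDeriv P t r → EqDeriv P s r
  | congr {n : ℕ} (f : L.Functions n) (ts us : Fin n → L.Term ℕ) :
      (∀ i, EqDeriv P (ts i) (us i)) → EqDeriv P (Term.func f ts) (Term.func f us)

/-- `P` is coherent: it derives no equation between two distinct numerals. -/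
def Coherent (c0 : L.Constants) (s1 : L.Functions 1) (P : Program L) : Prop :=
  ∀ m n : ℕ, m ≠ n → ¬ EqDeriv L P (num L c0 s1 m) (num L c0 s1 n)

section Semantics

variable (c0 : L.Constants) (s1 : L.Functions 1)
variable (M : Type w) [L.Structure M]

/-- The interpretation of `0` in `M`. -/
def zeroM : M := Structure.funMap c0 Matrix.vecEmpty

/-- The interpretation of `S` in `M`. -/
def succM (x : M) : M := Structure.funMap s1 ![x]

/-- `M` satisfies (the universal closures of) all equations of `P`. -/
def SatP (P : Program L) : Prop :=
  ∀ e ∈ P, ∀ v : ℕ → M, Term.realize v e.1 = Term.realize v e.2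

/-- `M` satisfies the separation axioms `∀x (S x ≠ 0)` and `∀x∀y (S x = S y → x = y)`. -/
def SatSep : Prop :=
  (∀ x : M, succM L s1 M x ≠ zeroM L c0 M) ∧
  (∀ x y : M, succM L s1 M x = succM L s1 M y → x = y)

/-- `M` satisfies every instance of the first-order induction schema
`A[0] → (∀x (A[x] → A[S x])) → ∀x A[x]`. -/
def SatInd : Prop :=
  ∀ (φ : L.BoundedFormula ℕ 1) (v : ℕ → M),
    φ.Realize v ![zeroM L c0 M] →
    (∀ x : M, φ.Realize v ![x] → φ.Realize v ![succM L s1 M x]) →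
    ∀ x : M, φ.Realize v ![x]

end Semantics

/-- `P` is strongly coherent: the theory `A(P)` (universal closures of the
equations of `P`, the separation axioms and full first-order induction) is
consistent, i.e. (by completeness) has a model. -/
def StronglyCoherent (c0 : L.Constants) (s1 : L.Functions 1) (P : Program L) : Prop :=
  ∃ (M : Type (max u v)) (_ : L.Structure M), Nonempty M ∧
    SatP L M P ∧ SatSep L c0 s1 M ∧ SatInd L c0 s1 M

/-- Instantiation of the (outermost) bound variable of a formula with one free
bound variable by a term. -/
def inst1 (φ : L.BoundedFormula ℕ 1) (t : L.Term ℕ) : L.Formula ℕ :=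
  φ.toFormula.subst (Sum.elim Term.var fun _ => t)

/-- Substitute the bound variable of `φ` by a term possibly mentioning the bound
variable, staying a formula with one bound-variable slot. -/
def bsubst (φ : L.BoundedFormula ℕ 1) (t : L.Term (ℕ ⊕ Fin 1)) : L.BoundedFormula ℕ 1 :=
  (φ.toFormula.subst (Sum.elim (fun i => Term.var (Sum.inl i)) fun _ => t)).relabel id

/-- `φ[S x / x]` for the bound variable `x`. -/
def shiftS (s1 : L.Functions 1) (φ : L.BoundedFormula ℕ 1) : L.BoundedFormula ℕ 1 :=
  bsubst L φ (succT L s1 (Term.var (Sum.inr 0)))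

/-- Basic terms: built only from `0`, `S` and variables. -/
inductive IsBasic (c0 : L.Constants) (s1 : L.Functions 1) : L.Term ℕ → Prop
  | var (x : ℕ) : IsBasic c0 s1 (Term.var x)
  | zero : IsBasic c0 s1 (zeroT L c0)
  | succ {t : L.Term ℕ} : IsBasic c0 s1 t → IsBasic c0 s1 (succT L s1 t)

/-- Classical natural deduction with equality, from a theory `T` (whose members
behave as universally closed axioms: their free variables are never eigenvariables)
and open assumptions `Γ`, where the terms used in universal elimination and
existential introduction are restricted to the class `B`. -/
inductive Prv (B : L.Term ℕ → Prop) (T : Set (L.Formula ℕ)) :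
    Set (L.Formula ℕ) → L.Formula ℕ → Prop
  | ax {Γ φ} : φ ∈ T → Prv B T Γ φ
  | hyp {Γ φ} : φ ∈ Γ → Prv B T Γ φ
  | impI {Γ φ ψ} : Prv B T (insert φ Γ) ψ → Prv B T Γ (φ.imp ψ)
  | impE {Γ φ ψ} : Prv B T Γ (φ.imp ψ) → Prv B T Γ φ → Prv B T Γ ψ
  | botE {Γ φ} : Prv B T Γ ⊥ → Prv B T Γ φ
  | dne {Γ φ} : Prv B T Γ φ.not.not → Prv B T Γ φ
  | allI {Γ} {φ : L.BoundedFormula ℕ 1} {y : ℕ} :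
      Prv B T Γ (inst1 L φ (Term.var y)) →
      (∀ ψ ∈ Γ, y ∉ ψ.freeVarFinset) → y ∉ φ.all.freeVarFinset →
      Prv B T Γ φ.all
  | allE {Γ} {φ : L.BoundedFormula ℕ 1} {t} :
      B t → Prv B T Γ φ.all → Prv B T Γ (inst1 L φ t)
  | exI {Γ} {φ : L.BoundedFormula ℕ 1} {t} :
      B t → Prv B T Γ (inst1 L φ t) → Prv B T Γ φ.ex
  | exE {Γ C} {φ : L.BoundedFormula ℕ 1} {y : ℕ} :
      Prv B T Γ φ.ex → Prv B T (insert (inst1 L φ (Term.var y)) Γ) C →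
      (∀ ψ ∈ Γ, y ∉ ψ.freeVarFinset) → y ∉ φ.all.freeVarFinset → y ∉ C.freeVarFinset →
      Prv B T Γ C
  | eqRefl (Γ) (t : L.Term ℕ) : Prv B T Γ (Term.equal t t)
  | eqSubst {Γ} {φ : L.BoundedFormula ℕ 1} {t s : L.Term ℕ} :
      Prv B T Γ (Term.equal t s) → Prv B T Γ (inst1 L φ t) → Prv B T Γ (inst1 L φ s)

/-- The equation `s = t` as a formula (an axiom with free variables, behaving as
its universal closure). -/
def eqAx (e : L.Term ℕ × L.Term ℕ) : L.Formula ℕ := Term.equal e.1 e.2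

/-- The separation axiom `∀x (S x ≠ 0)`. -/
def sepAx1 (c0 : L.Constants) (s1 : L.Functions 1) : L.Formula ℕ :=
  (BoundedFormula.equal (succT L s1 (Term.var (Sum.inr 0))) (zeroT L c0)).not.all

/-- The separation axiom `∀x∀y (S x = S y → x = y)`. -/
def sepAx2 (s1 : L.Functions 1) : L.Formula ℕ :=
  (((BoundedFormula.equal (succT L s1 (Term.var (Sum.inr 0)))
      (succT L s1 (Term.var (Sum.inr 1)))).imp
    (BoundedFormula.equal (Term.var (Sum.inr (0 : Fin 2))) (Term.var (Sum.inr 1)))).all).all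

/-- The induction axiom for the formula `φ`:
`φ[0] → (∀x (φ[x] → φ[S x])) → ∀x φ[x]`. -/
def indAx (c0 : L.Constants) (s1 : L.Functions 1) (φ : L.BoundedFormula ℕ 1) : L.Formula ℕ :=
  (inst1 L φ (zeroT L c0)).imp (((φ.imp (shiftS L s1 φ)).all).imp φ.all)

/-- The axioms of the theory `A(P)`. -/
def TheoryAP (c0 : L.Constants) (s1 : L.Functions 1) (P : Program L) : Set (L.Formula ℕ) :=
  {φ | ∃ e ∈ P, φ = eqAx L e} ∪ {sepAx1 L c0 s1, sepAx2 L s1} ∪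
    Set.range (indAx L c0 s1)

end PRFpaper

namespace PRFpaper

/-- Relativization `A ↦ A^N` of all quantifiers to the unary predicate `nr`:
`∀x B` becomes `∀x (N(x) → B)` (and hence the defined `∃x B = ¬∀x¬B` becomes
`¬∀x (N(x) → ¬B)`, which is `∃x (N(x) ∧ B)`). -/
def relativize {L : FirstOrder.Language} (nr : L.Relations 1) :
    ∀ {n}, L.BoundedFormula ℕ n → L.BoundedFormula ℕ n
  | _, BoundedFormula.falsum => BoundedFormula.falsum
  | _, BoundedFormula.equal a b => BoundedFormula.equal a b
  | _, BoundedFormula.rel R ts => BoundedFormula.rel R ts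
  | _, BoundedFormula.imp f g => (relativize nr f).imp (relativize nr g)
  | _, BoundedFormula.all f =>
      ((BoundedFormula.rel nr ![Term.var (Sum.inr (Fin.last _))]).imp
        (relativize nr f)).all

/-- Function symbols of the language of intrinsic theories: `0` and `S`. -/
inductive LNF : ℕ → Type
  | z : LNF 0
  | s : LNF 1

/-- Relation symbols: the data predicate `N`. -/
inductive LNR : ℕ → Type
  | N : LNR 1

/-- The language `{0, S, N}` of the intrinsic theory of natural numbers. -/
def LN : FirstOrder.Language := ⟨LNF, LNR⟩

def LNz : LN.Constants := LNF.z
def LNs : LN.Functions 1 := LNF.s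

/-- The atomic formula `N(t)` for a term `t`. -/
def NT (t : LN.Term ℕ) : LN.Formula ℕ :=
  BoundedFormula.rel LNR.N ![t.relabel Sum.inl]

/-- The atomic bounded formula `N(t)`. -/
def NB {n : ℕ} (t : LN.Term (ℕ ⊕ Fin n)) : LN.BoundedFormula ℕ n :=
  BoundedFormula.rel LNR.N ![t]

/-- Provability in the (discrete) intrinsic theory `IT(ℕ)`: classical natural
deduction with equality and unrestricted quantifier rules, from a theory `T`
and open assumptions, plus the data rules `N(0)`, `N(t) → N(S t)` and the
induction rule: from `N(t)`, `A[0]` and `∀x (A[x] → A[S x])` infer `A[t]`. -/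
inductive PrvIT (T : Set (LN.Formula ℕ)) :
    Set (LN.Formula ℕ) → LN.Formula ℕ → Prop
  | ax {Γ φ} : φ ∈ T → PrvIT T Γ φ
  | hyp {Γ φ} : φ ∈ Γ → PrvIT T Γ φ
  | impI {Γ φ ψ} : PrvIT T (insert φ Γ) ψ → PrvIT T Γ (φ.imp ψ)
  | impE {Γ φ ψ} : PrvIT T Γ (φ.imp ψ) → PrvIT T Γ φ → PrvIT T Γ ψ
  | botE {Γ φ} : PrvIT T Γ ⊥ → PrvIT T Γ φ
  | dne {Γ φ} : PrvIT T Γ φ.not.not → PrvIT T Γ φ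
  | allI {Γ} {φ : LN.BoundedFormula ℕ 1} {y : ℕ} :
      PrvIT T Γ (inst1 LN φ (Term.var y)) →
      (∀ ψ ∈ Γ, y ∉ ψ.freeVarFinset) → y ∉ φ.all.freeVarFinset →
      PrvIT T Γ φ.all
  | allE {Γ} {φ : LN.BoundedFormula ℕ 1} (t : LN.Term ℕ) :
      PrvIT T Γ φ.all → PrvIT T Γ (inst1 LN φ t)
  | exI {Γ} {φ : LN.BoundedFormula ℕ 1} (t : LN.Term ℕ) :
      PrvIT T Γ (inst1 LN φ t) → PrvIT T Γ φ.ex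
  | exE {Γ C} {φ : LN.BoundedFormula ℕ 1} {y : ℕ} :
      PrvIT T Γ φ.ex → PrvIT T (insert (inst1 LN φ (Term.var y)) Γ) C →
      (∀ ψ ∈ Γ, y ∉ ψ.freeVarFinset) → y ∉ φ.all.freeVarFinset →
      y ∉ C.freeVarFinset → PrvIT T Γ C
  | eqRefl (Γ) (t : LN.Term ℕ) : PrvIT T Γ (Term.equal t t)
  | eqSubst {Γ} {φ : LN.BoundedFormula ℕ 1} {t s : LN.Term ℕ} :
      PrvIT T Γ (Term.equal t s) → PrvIT T Γ (inst1 LN φ t) →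
      PrvIT T Γ (inst1 LN φ s)
  | nZero (Γ) : PrvIT T Γ (NT (zeroT LN LNz))
  | nSucc {Γ} {t : LN.Term ℕ} : PrvIT T Γ (NT t) → PrvIT T Γ (NT (succT LN LNs t))
  | nInd {Γ} {φ : LN.BoundedFormula ℕ 1} {t : LN.Term ℕ} :
      PrvIT T Γ (NT t) → PrvIT T Γ (inst1 LN φ (zeroT LN LNz)) →
      PrvIT T Γ ((φ.imp (shiftS LN LNs φ)).all) →
      PrvIT T Γ (inst1 LN φ t)

end PRFpaper

namespace PRFpaper


section AuxLemmas

variable {L : FirstOrder.Language.{u, v}}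

lemma varFinsetLeft_relabel_inl {α β : Type} [DecidableEq α] (t : L.Term α) :
    (t.relabel (Sum.inl : α → α ⊕ β)).varFinsetLeft = t.varFinset := by
  induction t with
  | var => rfl
  | func f ts ih => simp [Term.varFinsetLeft, Term.varFinset, ih]

lemma mem_varFinsetLeft_of_inl_mem_varFinset {α β : Type} [DecidableEq α] [DecidableEq β]
    (t : L.Term (α ⊕ β)) (a : α) (h : Sum.inl a ∈ t.varFinset) : a ∈ t.varFinsetLeft := by
  induction t with
  | var v => cases v <;> simp_all [Term.varFinset, Term.varFinsetLeft]
  | func f ts ih =>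
    simp only [Term.varFinset, Finset.mem_biUnion] at h
    obtain ⟨i, -, hi⟩ := h
    simp only [Term.varFinsetLeft, Finset.mem_biUnion]
    exact ⟨i, Finset.mem_univ _, ih i hi⟩

lemma mem_varFinsetLeft_relabel {γ δ : Type} [DecidableEq γ] [DecidableEq δ] {m : ℕ}
    (t : L.Term γ) (f : γ → δ ⊕ Fin m) (b : δ)
    (h : b ∈ (t.relabel f).varFinsetLeft) : ∃ c ∈ t.varFinset, f c = Sum.inl b := by
  induction t with
  | var v =>
    simp only [Term.relabel, Term.varFinsetLeft] at h
    rcases hfv : f v with a | j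
    · rw [hfv] at h; simp only [Term.varFinsetLeft, Finset.mem_singleton] at h
      exact ⟨v, by simp [Term.varFinset], by rw [hfv, h]⟩
    · rw [hfv] at h; simp at h
  | func f' ts ih =>
    simp only [Term.relabel, Term.varFinsetLeft, Finset.mem_biUnion] at h
    obtain ⟨i, -, hi⟩ := h
    obtain ⟨c, hc, hfc⟩ := ih i hi
    exact ⟨c, by simp only [Term.varFinset, Finset.mem_biUnion]; exact ⟨i, Finset.mem_univ _, hc⟩, hfc⟩

lemma mem_varFinsetLeft_subst {α β : Type} [DecidableEq α] [DecidableEq β] {k : ℕ}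
    (u : L.Term (α ⊕ Fin k)) (σ : α → L.Term β) (b : β)
    (h : b ∈ (u.subst (Sum.elim (Term.relabel Sum.inl ∘ σ) (Term.var ∘ Sum.inr))).varFinsetLeft) :
    ∃ a ∈ u.varFinsetLeft, b ∈ (σ a).varFinset := by
  induction u with
  | var v =>
    rcases v with a | j
    · refine ⟨a, by simp [Term.varFinsetLeft], ?_⟩
      simpa [Term.subst, varFinsetLeft_relabel_inl] using h
    · simp [Term.subst, Term.varFinsetLeft] at h
  | func f' ts ih =>
    simp only [Term.subst, Term.varFinsetLeft, Finset.mem_biUnion] at h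
    obtain ⟨i, -, hi⟩ := h
    obtain ⟨a, ha, hb⟩ := ih i hi
    exact ⟨a, by simp only [Term.varFinsetLeft, Finset.mem_biUnion]; exact ⟨i, Finset.mem_univ _, ha⟩, hb⟩

lemma varFinsetLeft_relabel_summap {α : Type} [DecidableEq α] {m n : ℕ}
    (t : L.Term (α ⊕ Fin m)) (f : Fin m → Fin n) :
    (t.relabel (Sum.map id f)).varFinsetLeft = t.varFinsetLeft := by
  induction t with
  | var v => cases v <;> simp [Term.relabel, Term.varFinsetLeft]
  | func f' ts ih => simp [Term.relabel, Term.varFinsetLeft, ih]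

lemma freeVarFinset_castLE {α : Type} [DecidableEq α] : ∀ {m n : ℕ} (h : m ≤ n)
    (χ : L.BoundedFormula α m), (χ.castLE h).freeVarFinset = χ.freeVarFinset
  | _, _, h, BoundedFormula.falsum => rfl
  | _, _, h, BoundedFormula.equal t₁ t₂ => by
      simp [BoundedFormula.castLE, BoundedFormula.freeVarFinset, varFinsetLeft_relabel_summap]
  | _, _, h, BoundedFormula.rel R ts => by
      simp [BoundedFormula.castLE, BoundedFormula.freeVarFinset, varFinsetLeft_relabel_summap]
  | _, _, h, BoundedFormula.imp f₁ f₂ => by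
      simp [BoundedFormula.castLE, BoundedFormula.freeVarFinset,
        freeVarFinset_castLE h f₁, freeVarFinset_castLE h f₂]
  | _, _, h, BoundedFormula.all f => by
      simp [BoundedFormula.castLE, BoundedFormula.freeVarFinset,
        freeVarFinset_castLE (Nat.add_le_add_right h 1) f]

lemma relabelAux_eq_inl {γ δ : Type} {m k : ℕ} {g : γ → δ ⊕ Fin m} (c : γ ⊕ Fin k) (b : δ)
    (h : BoundedFormula.relabelAux g k c = Sum.inl b) : ∃ a, c = Sum.inl a ∧ g a = Sum.inl b := by
  rcases c with a | j
  · rcases hga : g a with b' | j'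
    · refine ⟨a, rfl, ?_⟩
      simp [BoundedFormula.relabelAux, hga] at h
      rw [hga, h]
    · simp [BoundedFormula.relabelAux, hga] at h
  · simp [BoundedFormula.relabelAux] at h

lemma mem_freeVarFinset_relabel {γ δ : Type} [DecidableEq γ] [DecidableEq δ] {m : ℕ}
    (g : γ → δ ⊕ Fin m) : ∀ {k : ℕ} (χ : L.BoundedFormula γ k) (b : δ),
    b ∈ (χ.relabel g).freeVarFinset → ∃ c ∈ χ.freeVarFinset, g c = Sum.inl b := by
  intro k χ
  induction χ with
  | falsum => intro b h; simp [BoundedFormula.relabel, BoundedFormula.mapTermRel,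
      BoundedFormula.freeVarFinset] at h
  | equal t₁ t₂ =>
    intro b h
    simp only [BoundedFormula.relabel, BoundedFormula.mapTermRel,
      BoundedFormula.freeVarFinset, Finset.mem_union] at h
    rcases h with h | h <;>
      obtain ⟨c, hc, hgc⟩ := mem_varFinsetLeft_relabel _ _ _ h <;>
      obtain ⟨a, rfl, hga⟩ := relabelAux_eq_inl c b hgc <;>
      have ha := mem_varFinsetLeft_of_inl_mem_varFinset _ _ hc
    · exact ⟨a, by simp only [BoundedFormula.freeVarFinset, Finset.mem_union]; exact Or.inl ha, hga⟩
    · exact ⟨a, by simp only [BoundedFormula.freeVarFinset, Finset.mem_union]; exact Or.inr ha, hga⟩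
  | rel R ts =>
    intro b h
    simp only [BoundedFormula.relabel, BoundedFormula.mapTermRel,
      BoundedFormula.freeVarFinset, Finset.mem_biUnion] at h
    obtain ⟨i, -, hi⟩ := h
    obtain ⟨c, hc, hgc⟩ := mem_varFinsetLeft_relabel _ _ _ hi
    obtain ⟨a, rfl, hga⟩ := relabelAux_eq_inl c b hgc
    have ha := mem_varFinsetLeft_of_inl_mem_varFinset _ _ hc
    refine ⟨a, ?_, hga⟩
    simp only [BoundedFormula.freeVarFinset, Finset.mem_biUnion]
    exact ⟨i, Finset.mem_univ _, ha⟩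
  | imp f₁ f₂ ih1 ih2 =>
    intro b h
    simp only [BoundedFormula.relabel, BoundedFormula.mapTermRel] at h
    simp only [BoundedFormula.freeVarFinset, Finset.mem_union] at h
    rcases h with h | h
    · obtain ⟨c, hc, hgc⟩ := ih1 b h
      exact ⟨c, by simp only [BoundedFormula.freeVarFinset, Finset.mem_union]; exact Or.inl hc, hgc⟩
    · obtain ⟨c, hc, hgc⟩ := ih2 b h
      exact ⟨c, by simp only [BoundedFormula.freeVarFinset, Finset.mem_union]; exact Or.inr hc, hgc⟩
  | all f ih =>
    intro b h
    simp only [BoundedFormula.relabel, BoundedFormula.mapTermRel,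
      BoundedFormula.freeVarFinset] at h
    rw [freeVarFinset_castLE] at h
    exact ih b h

lemma mem_freeVarFinset_toFormula {α : Type} [DecidableEq α] :
    ∀ {n : ℕ} (φ : L.BoundedFormula α n) (a : α),
    Sum.inl a ∈ φ.toFormula.freeVarFinset → a ∈ φ.freeVarFinset := by
  intro n φ
  induction φ with
  | falsum => intro a h; simp [BoundedFormula.toFormula, BoundedFormula.freeVarFinset] at h
  | equal t₁ t₂ =>
    intro a h
    simp only [BoundedFormula.toFormula, Term.equal, Term.bdEqual,
      BoundedFormula.freeVarFinset, varFinsetLeft_relabel_inl, Finset.mem_union] at h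
    simp only [BoundedFormula.freeVarFinset, Finset.mem_union]
    rcases h with h | h
    · exact Or.inl (mem_varFinsetLeft_of_inl_mem_varFinset _ _ h)
    · exact Or.inr (mem_varFinsetLeft_of_inl_mem_varFinset _ _ h)
  | rel R ts =>
    intro a h
    simp only [BoundedFormula.toFormula, Relations.formula, Relations.boundedFormula,
      BoundedFormula.freeVarFinset, varFinsetLeft_relabel_inl, Finset.mem_biUnion] at h
    obtain ⟨i, -, hi⟩ := h
    simp only [BoundedFormula.freeVarFinset, Finset.mem_biUnion]
    exact ⟨i, Finset.mem_univ _, mem_varFinsetLeft_of_inl_mem_varFinset _ _ hi⟩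
  | imp f₁ f₂ ih1 ih2 =>
    intro a h
    simp only [BoundedFormula.toFormula, BoundedFormula.freeVarFinset,
      Finset.mem_union] at h ⊢
    rcases h with h | h
    · exact Or.inl (ih1 a h)
    · exact Or.inr (ih2 a h)
  | all f ih =>
    intro a h
    simp only [BoundedFormula.toFormula, BoundedFormula.freeVarFinset] at h
    obtain ⟨c, hc, hgc⟩ := mem_freeVarFinset_relabel _ _ _ h
    rcases c with a' | j
    · simp only [Sum.elim_inl, Function.comp_apply, Sum.inl.injEq] at hgc
      exact hgc ▸ ih a' hc
    · exfalso
      simp only [Sum.elim_inr, Function.comp_apply] at hgc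
      rcases hj : finSumFinEquiv.symm j with j' | j' <;> rw [hj] at hgc <;> simp at hgc

lemma mem_freeVarFinset_subst {α β : Type} [DecidableEq α] [DecidableEq β] :
    ∀ {n : ℕ} (ψ : L.BoundedFormula α n) (σ : α → L.Term β) (b : β),
    b ∈ (ψ.subst σ).freeVarFinset → ∃ a ∈ ψ.freeVarFinset, b ∈ (σ a).varFinset := by
  intro n ψ
  induction ψ with
  | falsum => intro σ b h; simp [BoundedFormula.subst, BoundedFormula.mapTermRel,
      BoundedFormula.freeVarFinset] at h
  | equal t₁ t₂ =>
    intro σ b h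
    simp only [BoundedFormula.subst, BoundedFormula.mapTermRel,
      BoundedFormula.freeVarFinset, Finset.mem_union] at h
    rcases h with h | h <;> obtain ⟨a, ha, hb⟩ := mem_varFinsetLeft_subst _ _ _ h
    · exact ⟨a, by simp only [BoundedFormula.freeVarFinset, Finset.mem_union]; exact Or.inl ha, hb⟩
    · exact ⟨a, by simp only [BoundedFormula.freeVarFinset, Finset.mem_union]; exact Or.inr ha, hb⟩
  | rel R ts =>
    intro σ b h
    simp only [BoundedFormula.subst, BoundedFormula.mapTermRel,
      BoundedFormula.freeVarFinset, Finset.mem_biUnion] at h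
    obtain ⟨i, -, hi⟩ := h
    obtain ⟨a, ha, hb⟩ := mem_varFinsetLeft_subst _ _ _ hi
    refine ⟨a, ?_, hb⟩
    simp only [BoundedFormula.freeVarFinset, Finset.mem_biUnion]
    exact ⟨i, Finset.mem_univ _, ha⟩
  | imp f₁ f₂ ih1 ih2 =>
    intro σ b h
    simp only [BoundedFormula.subst, BoundedFormula.mapTermRel] at h
    simp only [BoundedFormula.freeVarFinset, Finset.mem_union] at h
    rcases h with h | h
    · obtain ⟨a, ha, hb⟩ := ih1 σ b (by simpa [BoundedFormula.subst] using h)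
      exact ⟨a, by simp only [BoundedFormula.freeVarFinset, Finset.mem_union]; exact Or.inl ha, hb⟩
    · obtain ⟨a, ha, hb⟩ := ih2 σ b (by simpa [BoundedFormula.subst] using h)
      exact ⟨a, by simp only [BoundedFormula.freeVarFinset, Finset.mem_union]; exact Or.inr ha, hb⟩
  | all f ih =>
    intro σ b h
    simp only [BoundedFormula.subst, BoundedFormula.mapTermRel,
      BoundedFormula.freeVarFinset] at h
    exact ih σ b (by simpa [BoundedFormula.subst] using h)



lemma inst1_imp (φ ψ : L.BoundedFormula ℕ 1) (t : L.Term ℕ) :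
    inst1 L (φ.imp ψ) t = (inst1 L φ t).imp (inst1 L ψ t) := rfl

lemma inst1_falsum (t : L.Term ℕ) :
    inst1 L (⊥ : L.BoundedFormula ℕ 1) t = ⊥ := rfl

lemma shiftS_imp (s1 : L.Functions 1) (φ ψ : L.BoundedFormula ℕ 1) :
    shiftS L s1 (φ.imp ψ) = (shiftS L s1 φ).imp (shiftS L s1 ψ) := rfl

lemma shiftS_falsum (s1 : L.Functions 1) :
    shiftS L s1 (⊥ : L.BoundedFormula ℕ 1) = ⊥ := rfl

lemma fv_imp {α : Type} [DecidableEq α] {n : ℕ} (φ ψ : L.BoundedFormula α n) :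
    (φ.imp ψ).freeVarFinset = φ.freeVarFinset ∪ ψ.freeVarFinset := rfl

lemma fv_all {α : Type} [DecidableEq α] {n : ℕ} (φ : L.BoundedFormula α (n + 1)) :
    φ.all.freeVarFinset = φ.freeVarFinset := rfl

lemma fv_bot {α : Type} [DecidableEq α] {n : ℕ} :
    (⊥ : L.BoundedFormula α n).freeVarFinset = ∅ := rfl

lemma mem_fv_inst1 (φ : L.BoundedFormula ℕ 1) (t : L.Term ℕ) (b : ℕ)
    (h : b ∈ (inst1 L φ t).freeVarFinset) :
    b ∈ φ.freeVarFinset ∨ b ∈ t.varFinset := by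
  unfold inst1 at h
  obtain ⟨a, ha, hb⟩ := mem_freeVarFinset_subst _ _ _ h
  rcases a with i | j
  · left
    simp only [Sum.elim_inl, Term.varFinset, Finset.mem_singleton] at hb
    subst hb
    exact mem_freeVarFinset_toFormula _ _ ha
  · right
    simpa using hb

lemma mem_fv_shiftS (s1 : L.Functions 1) (φ : L.BoundedFormula ℕ 1) (b : ℕ)
    (h : b ∈ (shiftS L s1 φ).freeVarFinset) : b ∈ φ.freeVarFinset := by
  unfold shiftS bsubst at h
  obtain ⟨c, hc, hid⟩ := mem_freeVarFinset_relabel _ _ _ h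
  simp only [id_eq] at hid
  subst hid
  obtain ⟨a, ha, hb⟩ := mem_freeVarFinset_subst _ _ _ hc
  rcases a with i | j
  · simp only [Sum.elim_inl, Term.varFinset, Finset.mem_singleton, Sum.inl.injEq] at hb
    subst hb
    exact mem_freeVarFinset_toFormula _ _ ha
  · exfalso
    simp only [Sum.elim_inr, succT, Term.varFinset] at hb
    simp only [Finset.mem_biUnion, Finset.mem_univ, true_and] at hb
    obtain ⟨i, hi⟩ := hb
    fin_cases i
    simp [Term.varFinset] at hi

end AuxLemmas

section LNLemmas

lemma fv_relativize : ∀ {n : ℕ} (B : LN.BoundedFormula ℕ n),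
    (relativize LNR.N B).freeVarFinset = B.freeVarFinset := by
  intro n B
  induction B with
  | falsum => rfl
  | equal t₁ t₂ => rfl
  | rel R ts => rfl
  | imp f₁ f₂ ih1 ih2 => simp [relativize, BoundedFormula.freeVarFinset, ih1, ih2]
  | all f ih =>
    simp only [relativize, BoundedFormula.freeVarFinset, ih]
    ext b
    simp [Term.varFinsetLeft]

lemma fv_NT (t : LN.Term ℕ) : (NT t).freeVarFinset = t.varFinset := by
  ext b
  simp only [NT, BoundedFormula.freeVarFinset, Finset.mem_biUnion, Finset.mem_univ, true_and]
  constructor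
  · rintro ⟨i, hi⟩
    fin_cases i
    simpa [varFinsetLeft_relabel_inl] using hi
  · intro hb
    exact ⟨0, by simpa [varFinsetLeft_relabel_inl] using hb⟩

lemma fv_NB0 {n : ℕ} (j : Fin n) :
    (NB (Term.var (Sum.inr j)) : LN.BoundedFormula ℕ n).freeVarFinset = ∅ := by
  ext b
  simp only [NB, BoundedFormula.freeVarFinset, Finset.mem_biUnion, Finset.mem_univ, true_and,
    Finset.notMem_empty, iff_false]
  rintro ⟨i, hi⟩
  fin_cases i
  simp [Term.varFinsetLeft] at hi

lemma fv_NBS : (NB (succT LN LNs (Term.var (Sum.inr 0))) : LN.BoundedFormula ℕ 1).freeVarFinset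
    = ∅ := by
  ext b
  simp only [NB, BoundedFormula.freeVarFinset, Finset.mem_biUnion, Finset.mem_univ, true_and,
    Finset.notMem_empty, iff_false]
  rintro ⟨i, hi⟩
  fin_cases i
  simp only [succT, Matrix.cons_val_zero, Term.varFinsetLeft, Finset.mem_biUnion,
    Finset.mem_univ, true_and] at hi
  obtain ⟨j, hj⟩ := hi

lemma varFinset_zeroT : (zeroT LN LNz : LN.Term ℕ).varFinset = ∅ := by
  ext b
  simp only [zeroT, Term.varFinset, Finset.mem_biUnion, Finset.mem_univ, true_and,
    Finset.notMem_empty, iff_false]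
  rintro ⟨i, -⟩
  exact i.elim0

lemma inst1_NB (t : LN.Term ℕ) : inst1 LN (NB (Term.var (Sum.inr 0))) t = NT t := by
  unfold inst1 NB NT
  simp only [BoundedFormula.toFormula, Relations.formula, BoundedFormula.subst,
    BoundedFormula.mapTermRel, BoundedFormula.relabel, Relations.boundedFormula]
  congr 1
  funext i
  fin_cases i
  rfl

lemma inst1_NBS (t : LN.Term ℕ) :
    inst1 LN (NB (succT LN LNs (Term.var (Sum.inr 0)))) t = NT (succT LN LNs t) := by
  unfold inst1 NB NT succT
  simp only [BoundedFormula.toFormula, Relations.formula, BoundedFormula.subst,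
    BoundedFormula.mapTermRel, BoundedFormula.relabel, Relations.boundedFormula]
  congr 1
  funext i
  fin_cases i
  simp only [Matrix.cons_val_zero, Matrix.cons_val_fin_one, Term.relabel, Term.subst]
  congr 1

lemma shiftS_NB : shiftS LN LNs (NB (Term.var (Sum.inr 0))) =
    NB (succT LN LNs (Term.var (Sum.inr 0))) := by
  unfold shiftS bsubst NB succT
  simp only [BoundedFormula.toFormula, Relations.formula, BoundedFormula.subst,
    BoundedFormula.mapTermRel, BoundedFormula.relabel, Relations.boundedFormula]
  congr 1
  funext i
  fin_cases i
  simp only [Matrix.cons_val_zero, Matrix.cons_val_fin_one, Term.relabel, Term.subst, Sum.elim_inr, Sum.elim_inl, Function.comp_apply]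
  congr 1
  funext j
  fin_cases j
  simp only [Matrix.cons_val_zero, Matrix.cons_val_fin_one, Term.relabel, Term.subst]
  rfl


end LNLemmas


section MainProof

/-- Abbreviation: the formula `N(x) ∧ A[x]` coded as `¬(N(x) → ¬A[x])`. -/
private def conjNA (A : LN.BoundedFormula ℕ 1) : LN.BoundedFormula ℕ 1 :=
  ((NB (Term.var (Sum.inr 0))).imp (A.imp ⊥)).imp ⊥

lemma aux_main (Γ : Set (LN.Formula ℕ)) (A : LN.BoundedFormula ℕ 1) (y z : ℕ)
    (hNy : NT (Term.var y) ∈ Γ)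
    (hA0 : inst1 LN A (zeroT LN LNz) ∈ Γ)
    (hH : ((NB (Term.var (Sum.inr 0))).imp (A.imp (shiftS LN LNs A))).all ∈ Γ)
    (hnA : (inst1 LN A (Term.var y)).imp ⊥ ∈ Γ)
    (hfresh : ∀ ψ ∈ Γ, z ∉ ψ.freeVarFinset)
    (hzA : z ∉ A.freeVarFinset) :
    PrvIT ∅ Γ (⊥ : LN.Formula ℕ) := by
  have hφfv : ∀ b, b ∈ (conjNA A).freeVarFinset → b ∈ A.freeVarFinset := by
    intro b hb
    simp only [conjNA, fv_imp, fv_NB0, fv_bot, Finset.mem_union,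
      Finset.notMem_empty, false_or, or_false] at hb
    exact hb
  -- base case of the induction rule
  have pf0 : PrvIT ∅ Γ (inst1 LN (conjNA A) (zeroT LN LNz)) := by
    simp only [conjNA, inst1_imp, inst1_falsum, inst1_NB]
    apply PrvIT.impI
    exact PrvIT.impE
      (PrvIT.impE (PrvIT.hyp (Set.mem_insert _ _)) (PrvIT.nZero _))
      (PrvIT.hyp (Set.mem_insert_of_mem _ hA0))
  -- step case of the induction rule
  have pfstep : PrvIT ∅ Γ (((conjNA A).imp (shiftS LN LNs (conjNA A))).all) := by
    refine PrvIT.allI (y := z) ?_ hfresh ?_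
    · simp only [conjNA, shiftS_imp, shiftS_falsum, shiftS_NB, inst1_imp, inst1_falsum,
        inst1_NB, inst1_NBS]
      apply PrvIT.impI
      apply PrvIT.impI
      set Xz : LN.Formula ℕ :=
        ((NT (Term.var z)).imp ((inst1 LN A (Term.var z)).imp ⊥)).imp ⊥ with hXz
      set gz : LN.Formula ℕ := (NT (succT LN LNs (Term.var z))).imp
        ((inst1 LN (shiftS LN LNs A) (Term.var z)).imp ⊥) with hgz
      have hX : PrvIT ∅ (insert gz (insert Xz Γ)) Xz :=
        PrvIT.hyp (Set.mem_insert_of_mem _ (Set.mem_insert _ _))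
      have hg : PrvIT ∅ (insert gz (insert Xz Γ)) gz :=
        PrvIT.hyp (Set.mem_insert _ _)
      have hNz : PrvIT ∅ (insert gz (insert Xz Γ)) (NT (Term.var z)) := by
        apply PrvIT.dne
        apply PrvIT.impI
        refine PrvIT.impE (PrvIT.hyp (φ := Xz) (Set.mem_insert_of_mem _
          (Set.mem_insert_of_mem _ (Set.mem_insert _ _)))) ?_
        apply PrvIT.impI
        exact PrvIT.botE (PrvIT.impE
          (PrvIT.hyp (φ := (NT (Term.var z)).not)
            (Set.mem_insert_of_mem _ (Set.mem_insert _ _)))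
          (PrvIT.hyp (Set.mem_insert _ _)))
      have hAz : PrvIT ∅ (insert gz (insert Xz Γ)) (inst1 LN A (Term.var z)) := by
        apply PrvIT.dne
        apply PrvIT.impI
        refine PrvIT.impE (PrvIT.hyp (φ := Xz) (Set.mem_insert_of_mem _
          (Set.mem_insert_of_mem _ (Set.mem_insert _ _)))) ?_
        apply PrvIT.impI
        exact PrvIT.hyp (Set.mem_insert_of_mem _ (Set.mem_insert _ _))
      have hHz := PrvIT.allE (T := (∅ : Set (LN.Formula ℕ))) (Term.var z)
        (PrvIT.hyp (Γ := insert gz (insert Xz Γ))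
          (Set.mem_insert_of_mem _ (Set.mem_insert_of_mem _ hH)))
      simp only [inst1_imp, inst1_NB] at hHz
      have hSAz := PrvIT.impE (PrvIT.impE hHz hNz) hAz
      exact PrvIT.impE (PrvIT.impE hg (PrvIT.nSucc hNz)) hSAz
    · intro h
      simp only [fv_all, fv_imp, Finset.mem_union] at h
      rcases h with h | h
      · exact hzA (hφfv z h)
      · exact hzA (hφfv z (mem_fv_shiftS _ _ _ h))
  have φy := PrvIT.nInd (PrvIT.hyp hNy) pf0 pfstep
  simp only [conjNA, inst1_imp, inst1_falsum, inst1_NB] at φy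
  exact PrvIT.impE φy (PrvIT.impI (PrvIT.hyp (Set.mem_insert_of_mem _ hnA)))

end MainProof

/-- In the intrinsic theory `IT(ℕ)` the relativized induction
schema is derivable:
`B^N[0] → ∀y (N(y) → B^N[y] → B^N[S y]) → ∀y (N(y) → B^N[y])`
for every formula `B`. -/
theorem relativized_induction_derivable_in_IT (B : LN.BoundedFormula ℕ 1) :
    PrvIT ∅ ∅
      ((inst1 LN (relativize LNR.N B) (zeroT LN LNz)).imp
        ((((NB (Term.var (Sum.inr 0))).imp
            ((relativize LNR.N B).imp (shiftS LN LNs (relativize LNR.N B)))).all).imp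
          (((NB (Term.var (Sum.inr 0))).imp (relativize LNR.N B)).all))) := by
  have hfvA : (relativize LNR.N B).freeVarFinset = B.freeVarFinset := fv_relativize B
  set m := B.freeVarFinset.sup id with hm
  have hboundA : ∀ b ∈ (relativize LNR.N B).freeVarFinset, b ≤ m := by
    intro b hb
    rw [hfvA] at hb
    exact Finset.le_sup (f := id) hb
  have hfvSA : ∀ b ∈ (shiftS LN LNs (relativize LNR.N B)).freeVarFinset, b ≤ m :=
    fun b hb => hboundA b (mem_fv_shiftS _ _ _ hb)
  have hfvA0 : ∀ b ∈ (inst1 LN (relativize LNR.N B) (zeroT LN LNz)).freeVarFinset, b ≤ m := by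
    intro b hb
    rcases mem_fv_inst1 _ _ _ hb with h | h
    · exact hboundA _ h
    · rw [varFinset_zeroT] at h
      exact absurd h (Finset.notMem_empty _)
  have hfvH : ∀ b ∈ (((NB (Term.var (Sum.inr 0))).imp
      ((relativize LNR.N B).imp (shiftS LN LNs (relativize LNR.N B)))).all).freeVarFinset,
      b ≤ m := by
    intro b hb
    simp only [fv_all, fv_imp, fv_NB0, Finset.mem_union,
      Finset.notMem_empty, false_or] at hb
    rcases hb with h | h
    · exact hboundA _ h
    · exact hfvSA _ h
  have hfvNy : ∀ w b : ℕ, b ∈ (NT (Term.var w)).freeVarFinset → b = w := by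
    intro w b hb
    rw [fv_NT] at hb
    simpa [Term.varFinset] using hb
  have hfvIA : ∀ w b : ℕ, b ∈ (inst1 LN (relativize LNR.N B) (Term.var w)).freeVarFinset →
      b ≤ m ∨ b = w := by
    intro w b hb
    rcases mem_fv_inst1 _ _ _ hb with h | h
    · exact Or.inl (hboundA _ h)
    · exact Or.inr (by simpa [Term.varFinset] using h)
  apply PrvIT.impI
  apply PrvIT.impI
  refine PrvIT.allI (y := m + 1) ?_ ?_ ?_
  · simp only [inst1_imp, inst1_NB]
    apply PrvIT.impI
    apply PrvIT.dne
    apply PrvIT.impI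
    refine aux_main _ (relativize LNR.N B) (m + 1) (m + 2) ?_ ?_ ?_ ?_ ?_ ?_
    · exact Set.mem_insert_of_mem _ (Set.mem_insert _ _)
    · exact Set.mem_insert_of_mem _ (Set.mem_insert_of_mem _
        (Set.mem_insert_of_mem _ (Set.mem_insert _ _)))
    · exact Set.mem_insert_of_mem _ (Set.mem_insert_of_mem _ (Set.mem_insert _ _))
    · exact Set.mem_insert _ _
    · intro ψ hψ
      simp only [Set.mem_insert_iff, Set.mem_empty_iff_false, or_false] at hψ
      rcases hψ with rfl | rfl | rfl | rfl
      · intro h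
        simp only [BoundedFormula.not, fv_imp, fv_bot,
          Finset.mem_union, Finset.notMem_empty, or_false] at h
        rcases hfvIA _ _ h with h' | h' <;> omega
      · intro h
        have := hfvNy _ _ h
        omega
      · intro h
        have := hfvH _ h
        omega
      · intro h
        have := hfvA0 _ h
        omega
    · intro h
      have := hboundA _ h
      omega
  · intro ψ hψ
    simp only [Set.mem_insert_iff, Set.mem_empty_iff_false, or_false] at hψ
    rcases hψ with rfl | rfl
    · intro h
      have := hfvH _ h
      omega
    · intro h
      have := hfvA0 _ h
      omega
  · intro h
    simp only [fv_all, fv_imp, fv_NB0, Finset.mem_union,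
      Finset.notMem_empty, false_or] at h
    have := hboundA _ h
    omega


end PRFpaper
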